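/- Let n, m be positive integers with 8m | n. For every bit string x_ℓ of length n/m in U and every y_ℓ of length n/m in P, the Hamming distance satisfies H(x_ℓ, y_ℓ) ≥ n/(4m), where U is the set of strings whose four consecutive quarters each have between n/(12m) and n/(6m) ones, and P is the set of strings of the form 1^a 0^{n/m - a} (longest all-ones prefix plus longest all-zeros suffix equals n/m). -/
import Mathlib

/-- `z` is in `U`: each of the four consecutive quarters of length `n/(4*m)` of the
string of length `n/m` contains between `n/(12*m)` and `n/(6*m)` ones. -/
def InU (n m : ℕ) (z : Fin (n / m) → Bool) : Prop :=
  ∀ q : Fin 4,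
    n / (12 * m) ≤ (Finset.univ.filter (fun i : Fin (n / m) =>
      z i = true ∧ (q : ℕ) * (n / (4 * m)) ≤ (i : ℕ) ∧
        (i : ℕ) < ((q : ℕ) + 1) * (n / (4 * m)))).card ∧
    (Finset.univ.filter (fun i : Fin (n / m) =>
      z i = true ∧ (q : ℕ) * (n / (4 * m)) ≤ (i : ℕ) ∧
        (i : ℕ) < ((q : ℕ) + 1) * (n / (4 * m)))).card ≤ n / (6 * m)

/-- `z` is in `P`: `z = 1^a 0^(L-a)`, i.e. the longest all-ones prefix plus the
longest all-zeros suffix equals the length. -/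
def InP (L : ℕ) (z : Fin L → Bool) : Prop :=
  ∃ a ≤ L, ∀ i : Fin L, z i = true ↔ (i : ℕ) < a

lemma band_card (L lo hi : ℕ) (h : hi ≤ L) :
    (Finset.univ.filter (fun i : Fin L => lo ≤ (i:ℕ) ∧ (i:ℕ) < hi)).card = hi - lo := by
  rw [← Nat.card_Ico]
  refine Finset.card_bij (fun i _ => (i : ℕ)) ?_ ?_ ?_
  · intro i hi'
    simp only [Finset.mem_filter, Finset.mem_univ, true_and] at hi'
    simp [Finset.mem_Ico]; omega
  · intro i _ j _ hij; exact Fin.ext hij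
  · intro b hb
    simp only [Finset.mem_Ico] at hb
    exact ⟨⟨b, lt_of_lt_of_le hb.2 h⟩, by simp; omega, rfl⟩

lemma quarter_bound {L t : ℕ} (x y : Fin L → Bool) (lo hi : ℕ)
    (hhi : hi ≤ L) (hcard : hi - lo = 6 * t)
    (ho1 : 2 * t ≤ (Finset.univ.filter (fun i : Fin L =>
        x i = true ∧ lo ≤ (i:ℕ) ∧ (i:ℕ) < hi)).card)
    (ho2 : (Finset.univ.filter (fun i : Fin L =>
        x i = true ∧ lo ≤ (i:ℕ) ∧ (i:ℕ) < hi)).card ≤ 4 * t)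
    (b : Bool) (hb : ∀ i : Fin L, lo ≤ (i:ℕ) → (i:ℕ) < hi → y i = b) :
    2 * t ≤ (Finset.univ.filter (fun i : Fin L =>
        x i ≠ y i ∧ lo ≤ (i:ℕ) ∧ (i:ℕ) < hi)).card := by
  cases b with
  | false =>
      refine le_trans ho1 (Finset.card_le_card ?_)
      intro i hi'
      simp only [Finset.mem_filter, Finset.mem_univ, true_and] at hi' ⊢
      obtain ⟨hxt, h1, h2⟩ := hi'
      refine ⟨?_, h1, h2⟩
      rw [hxt, hb i h1 h2]; simp
  | true =>
      -- zeros set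
      have hsub : (Finset.univ.filter (fun i : Fin L =>
          x i = false ∧ lo ≤ (i:ℕ) ∧ (i:ℕ) < hi)) ⊆
          (Finset.univ.filter (fun i : Fin L =>
          x i ≠ y i ∧ lo ≤ (i:ℕ) ∧ (i:ℕ) < hi)) := by
        intro i hi'
        simp only [Finset.mem_filter, Finset.mem_univ, true_and] at hi' ⊢
        obtain ⟨hxt, h1, h2⟩ := hi'
        refine ⟨?_, h1, h2⟩
        rw [hxt, hb i h1 h2]; simp
      have hunion : (Finset.univ.filter (fun i : Fin L =>
            x i = false ∧ lo ≤ (i:ℕ) ∧ (i:ℕ) < hi)).card +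
          (Finset.univ.filter (fun i : Fin L =>
            x i = true ∧ lo ≤ (i:ℕ) ∧ (i:ℕ) < hi)).card =
          (Finset.univ.filter (fun i : Fin L => lo ≤ (i:ℕ) ∧ (i:ℕ) < hi)).card := by
        rw [← Finset.card_union_of_disjoint]
        · congr 1
          ext i
          simp only [Finset.mem_union, Finset.mem_filter, Finset.mem_univ, true_and]
          cases hxi : x i <;> simp [hxi] <;> tauto
        · rw [Finset.disjoint_left]
          intro i h1 h2
          simp only [Finset.mem_filter, Finset.mem_univ, true_and] at h1 h2
          rw [h1.1] at h2; exact absurd h2.1 (by simp)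
      rw [band_card L lo hi hhi, hcard] at hunion
      have := Finset.card_le_card hsub
      omega

lemma combine_three {L : ℕ} (x y : Fin L → Bool) (c : ℕ)
    (lo1 hi1 lo2 hi2 lo3 hi3 : ℕ)
    (h12 : hi1 ≤ lo2) (h22 : lo2 ≤ hi2) (h23 : hi2 ≤ lo3)
    (h1 : 2 * c ≤ (Finset.univ.filter (fun i : Fin L =>
        x i ≠ y i ∧ lo1 ≤ (i:ℕ) ∧ (i:ℕ) < hi1)).card)
    (h2 : 2 * c ≤ (Finset.univ.filter (fun i : Fin L =>
        x i ≠ y i ∧ lo2 ≤ (i:ℕ) ∧ (i:ℕ) < hi2)).card)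
    (h3 : 2 * c ≤ (Finset.univ.filter (fun i : Fin L =>
        x i ≠ y i ∧ lo3 ≤ (i:ℕ) ∧ (i:ℕ) < hi3)).card) :
    6 * c ≤ (Finset.univ.filter (fun i : Fin L => x i ≠ y i)).card := by
  set A := (Finset.univ.filter (fun i : Fin L =>
      x i ≠ y i ∧ lo1 ≤ (i:ℕ) ∧ (i:ℕ) < hi1)) with hA
  set B := (Finset.univ.filter (fun i : Fin L =>
      x i ≠ y i ∧ lo2 ≤ (i:ℕ) ∧ (i:ℕ) < hi2)) with hB
  set C := (Finset.univ.filter (fun i : Fin L =>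
      x i ≠ y i ∧ lo3 ≤ (i:ℕ) ∧ (i:ℕ) < hi3)) with hC
  have hAB : Disjoint A B := by
    rw [Finset.disjoint_left]; intro i hiA hiB
    simp only [hA, hB, Finset.mem_filter, Finset.mem_univ, true_and] at hiA hiB
    omega
  have hAC : Disjoint A C := by
    rw [Finset.disjoint_left]; intro i hiA hiB
    simp only [hA, hC, Finset.mem_filter, Finset.mem_univ, true_and] at hiA hiB
    omega
  have hBC : Disjoint B C := by
    rw [Finset.disjoint_left]; intro i hiA hiB
    simp only [hB, hC, Finset.mem_filter, Finset.mem_univ, true_and] at hiA hiB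
    omega
  have hsub : A ∪ B ∪ C ⊆ (Finset.univ.filter (fun i : Fin L => x i ≠ y i)) := by
    intro i hi'
    simp only [Finset.mem_union, hA, hB, hC, Finset.mem_filter, Finset.mem_univ,
      true_and] at hi' ⊢
    tauto
  have := Finset.card_le_card hsub
  rw [Finset.card_union_of_disjoint (by
        rw [Finset.disjoint_union_left]; exact ⟨hAC, hBC⟩),
      Finset.card_union_of_disjoint hAB] at this
  omega

theorem stmt19 (n m : ℕ) (hn : 0 < n) (hm : 0 < m) (hdvd : 24 * m ∣ n)
    (x y : Fin (n / m) → Bool) (hx : InU n m x) (hy : InP (n / m) y) :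
    n / (4 * m) ≤ (Finset.univ.filter (fun i => x i ≠ y i)).card := by
  obtain ⟨t, ht⟩ := hdvd
  have hL : n / m = 24 * t := by
    rw [ht, show 24 * m * t = m * (24 * t) by ring, Nat.mul_div_cancel_left _ hm]
  have h4 : n / (4 * m) = 6 * t := by
    rw [ht, show 24 * m * t = (4 * m) * (6 * t) by ring,
      Nat.mul_div_cancel_left _ (by positivity)]
  have h12 : n / (12 * m) = 2 * t := by
    rw [ht, show 24 * m * t = (12 * m) * (2 * t) by ring,
      Nat.mul_div_cancel_left _ (by positivity)]
  have h6 : n / (6 * m) = 4 * t := by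
    rw [ht, show 24 * m * t = (6 * m) * (4 * t) by ring,
      Nat.mul_div_cancel_left _ (by positivity)]
  unfold InU at hx
  simp only [h4, h12, h6] at hx
  rw [h4]
  obtain ⟨a, haL, hya⟩ := hy
  rw [hL] at haL
  -- per-quarter bounds
  have key : ∀ j : Fin 4, ((j:ℕ) + 1) * (6 * t) ≤ a ∨ a ≤ (j:ℕ) * (6 * t) →
      2 * t ≤ (Finset.univ.filter (fun i : Fin (n / m) =>
        x i ≠ y i ∧ (j:ℕ) * (6 * t) ≤ (i:ℕ) ∧ (i:ℕ) < ((j:ℕ) + 1) * (6 * t))).card := by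
    intro j hj
    have hj3 : (j : ℕ) ≤ 3 := by omega
    refine quarter_bound x y _ _ (by rw [hL]; nlinarith) (by ring_nf; omega)
      (hx j).1 (hx j).2 (if ((j:ℕ) + 1) * (6 * t) ≤ a then true else false) ?_
    intro i hi1 hi2
    split
    · next h => exact (hya i).2 (by omega)
    · next h =>
        rcases hj with h' | h'
        · exact absurd h' h
        · simp only [Bool.eq_false_iff]
          intro hcon
          have := (hya i).1 hcon
          omega
  -- now case on where a lies
  have key' : ∀ j : Fin 4, ((j:ℕ) + 1) * (6 * t) ≤ a ∨ a ≤ (j:ℕ) * (6 * t) →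
      2 * t ≤ (Finset.univ.filter (fun i : Fin (n / m) =>
        x i ≠ y i ∧ (j:ℕ) * (6 * t) ≤ (i:ℕ) ∧ (i:ℕ) < ((j:ℕ) + 1) * (6 * t))).card := key
  rcases le_or_gt a (6 * t) with hc | hc
  · refine combine_three x y t (1 * (6 * t)) (2 * (6 * t)) (2 * (6 * t)) (3 * (6 * t))
      (3 * (6 * t)) (4 * (6 * t)) le_rfl (by omega) le_rfl ?_ ?_ ?_
    · simpa using key 1 (Or.inr (by simpa using hc))
    · simpa using key 2 (Or.inr (by first | omega | (simp; omega)))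
    · simpa using key 3 (Or.inr (by first | omega | (simp; omega)))
  rcases le_or_gt a (12 * t) with hc2 | hc2
  · refine combine_three x y t (0 * (6 * t)) (1 * (6 * t)) (2 * (6 * t)) (3 * (6 * t))
      (3 * (6 * t)) (4 * (6 * t)) (by omega) (by omega) le_rfl ?_ ?_ ?_
    · simpa using key 0 (Or.inl (by first | omega | (simp; omega)))
    · simpa using key 2 (Or.inr (by first | omega | (simp; omega)))
    · simpa using key 3 (Or.inr (by first | omega | (simp; omega)))
  rcases le_or_gt a (18 * t) with hc3 | hc3
  · refine combine_three x y t (0 * (6 * t)) (1 * (6 * t)) (1 * (6 * t)) (2 * (6 * t))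
      (3 * (6 * t)) (4 * (6 * t)) le_rfl (by omega) (by omega) ?_ ?_ ?_
    · simpa using key 0 (Or.inl (by first | omega | (simp; omega)))
    · simpa using key 1 (Or.inl (by first | omega | (simp; omega)))
    · simpa using key 3 (Or.inr (by first | omega | (simp; omega)))
  · refine combine_three x y t (0 * (6 * t)) (1 * (6 * t)) (1 * (6 * t)) (2 * (6 * t))
      (2 * (6 * t)) (3 * (6 * t)) le_rfl (by omega) le_rfl ?_ ?_ ?_
    · simpa using key 0 (Or.inl (by first | omega | (simp; omega)))
    · simpa using key 1 (Or.inl (by first | omega | (simp; omega)))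
    · simpa using key 2 (Or.inl (by first | omega | (simp; omega)))
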